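/- In the chase under conceptual dependencies, every fact over a relationship predicate r ∈ R_R contains either only non-fresh constants, or only fresh constants, or exactly one distinct non-fresh constant (possibly occurring in several positions); no other combination occurs. -/

import Mathlib

/-- Constants: `Sum.inl` = non-fresh constants (dom), `Sum.inr` = fresh constants (Γ_f). -/
abbrev Const := ℕ ⊕ ℕ

def nonFresh (c : Const) : Prop := ∃ n, c = Sum.inl n
def isFresh (c : Const) : Prop := ∃ n, c = Sum.inr n

/-- An atom over an argument type `α` (for facts, `α = Const`; for query bodies, terms). -/
structure GAtom (α : Type) where
  rel : String
  args : List α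
deriving DecidableEq

abbrev Atom := GAtom Const
/-- A (possibly infinite) database instance is a set of facts. -/
abbrev DB := Set Atom

def mapAtom (f : Const → Const) (a : Atom) : Atom := ⟨a.rel, a.args.map f⟩

/-- `μ` is a homomorphism from the set of atoms `D1` to `D2` (as a map on constants). -/
def isHom (μ : Const → Const) (D1 D2 : DB) : Prop := ∀ a ∈ D1, mapAtom μ a ∈ D2

/-- `μ` fixes all non-fresh constants. -/
def homFix (μ : Const → Const) : Prop := ∀ n : ℕ, μ (Sum.inl n) = Sum.inl n

/-- `c` occurs as an argument of some fact of `D`. -/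
def occursC (c : Const) (D : DB) : Prop := ∃ a ∈ D, c ∈ a.args

/-- Projection of a tuple on a sequence of (0-based) attribute positions. -/
def projT (l : List Const) (X : List ℕ) : List (Option Const) := X.map (l[·]?)

/-- An inclusion dependency `r1[X] ⊆ r2[Y]`. -/
structure IncDep where
  r1 : String
  X : List ℕ
  r2 : String
  Y : List ℕ

/-- A key dependency `key(r) = K`. -/
structure KeyDep where
  r : String
  K : List ℕ

structure Deps where
  ids : Set IncDep
  kds : Set KeyDep

def satID (D : DB) (σ : IncDep) : Prop :=
  ∀ a ∈ D, a.rel = σ.r1 →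
    ∃ b ∈ D, b.rel = σ.r2 ∧ projT a.args σ.X = projT b.args σ.Y

def satKD (D : DB) (κ : KeyDep) : Prop :=
  ∀ a ∈ D, ∀ b ∈ D, a.rel = κ.r → b.rel = κ.r →
    projT a.args κ.K = projT b.args κ.K → a = b

def satDeps (D : DB) (Sg : Deps) : Prop :=
  (∀ σ ∈ Sg.ids, satID D σ) ∧ (∀ κ ∈ Sg.kds, satKD D κ)

/-- One application of the ID chase rule (`ar` gives the arity of each relation):
a fact of `r1` with no matching fact of `r2` generates a new fact of `r2`, with
distinct fresh constants, not occurring in the current instance, at all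
unconstrained positions. -/
def IDStep (ar : String → ℕ) (Sg : Deps) (S S' : DB) : Prop :=
  ∃ σ ∈ Sg.ids, ∃ a ∈ S, a.rel = σ.r1 ∧
    (¬ ∃ b ∈ S, b.rel = σ.r2 ∧ projT a.args σ.X = projT b.args σ.Y) ∧
    ∃ b : Atom, b.rel = σ.r2 ∧ b.args.length = ar σ.r2 ∧
      projT a.args σ.X = projT b.args σ.Y ∧
      (∀ i, i < b.args.length → i ∉ σ.Y →
        ∃ c, b.args[i]? = some c ∧ isFresh c ∧ ¬ occursC c S) ∧
      (∀ i j, i < b.args.length → j < b.args.length → i ≠ j → i ∉ σ.Y → j ∉ σ.Y →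
        b.args[i]? ≠ b.args[j]?) ∧
      S' = S ∪ {b}

/-- One application of the KD chase rule: two distinct facts of `r` agreeing on the
key are merged via a map `μ` that never changes a non-fresh constant. -/
def KDStep (Sg : Deps) (S S' : DB) : Prop :=
  ∃ κ ∈ Sg.kds, ∃ a ∈ S, ∃ b ∈ S, a ≠ b ∧ a.rel = κ.r ∧ b.rel = κ.r ∧
    projT a.args κ.K = projT b.args κ.K ∧
    ∃ μ : Const → Const,
      (∀ c, ¬ isFresh c → μ c = c) ∧
      mapAtom μ a = mapAtom μ b ∧
      (∀ c, μ c ≠ c → ∃ i : ℕ,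
        (a.args[i]? = some c ∧ b.args[i]? = some (μ c)) ∨
        (b.args[i]? = some c ∧ a.args[i]? = some (μ c))) ∧
      S' = (mapAtom μ) '' S

def ChaseStep (ar : String → ℕ) (Sg : Deps) (S S' : DB) : Prop :=
  IDStep ar Sg S S' ∨ KDStep Sg S S'

/-- The limit of a chase sequence: the eventually persistent facts. -/
def chaseLimit (seq : ℕ → DB) : DB := {a | ∃ N, ∀ n, N ≤ n → a ∈ seq n}

/-- `Ch` is the chase of `D` under `Sg` (and it exists): a fair exhaustive sequence of
chase-rule applications starting from `D`, whose limit satisfies all dependencies. -/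
def IsChase (ar : String → ℕ) (Sg : Deps) (D Ch : DB) : Prop :=
  ∃ seq : ℕ → DB, seq 0 = D ∧
    (∀ n, ChaseStep ar Sg (seq n) (seq (n + 1)) ∨ seq (n + 1) = seq n) ∧
    Ch = chaseLimit seq ∧ satDeps Ch Sg

/-- Signature arising from an EER schema: unary entity predicates `RE`,
relationship predicates `RR` of arity ≥ 2, with arity function `ar`. -/
structure EERSig where
  RE : Set String
  RR : Set String
  ar : String → ℕ

def isPermList (n : ℕ) (Y : List ℕ) : Prop := Y.Perm (List.range n)

/-- `Sg` is a set of conceptual dependencies over the signature `G`. -/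
def CDshaped (G : EERSig) (Sg : Deps) : Prop :=
  (∀ r ∈ G.RE, G.ar r = 1) ∧ (∀ r ∈ G.RR, 2 ≤ G.ar r) ∧
  (∀ r, ¬ (r ∈ G.RE ∧ r ∈ G.RR)) ∧
  (∀ σ ∈ Sg.ids,
    (σ.r1 ∈ G.RE ∧ σ.r2 ∈ G.RE ∧ σ.X = [0] ∧ σ.Y = [0]) ∨
    (σ.r1 ∈ G.RE ∧ σ.r2 ∈ G.RR ∧ σ.X = [0] ∧ ∃ i, i < G.ar σ.r2 ∧ σ.Y = [i]) ∨
    (σ.r1 ∈ G.RR ∧ σ.r2 ∈ G.RE ∧ (∃ i, i < G.ar σ.r1 ∧ σ.X = [i]) ∧ σ.Y = [0]) ∨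
    (σ.r1 ∈ G.RR ∧ σ.r2 ∈ G.RR ∧ G.ar σ.r1 = G.ar σ.r2 ∧
      σ.X = List.range (G.ar σ.r1) ∧ isPermList (G.ar σ.r1) σ.Y)) ∧
  (∀ κ ∈ Sg.kds, κ.r ∈ G.RR ∧ ∃ i, i < G.ar κ.r ∧ κ.K = [i])

namespace CDP

lemma const_cases (c : Const) : nonFresh c ∨ isFresh c := by
  rcases c with n | n
  · exact Or.inl ⟨n, rfl⟩
  · exact Or.inr ⟨n, rfl⟩

lemma nf_not_fresh {c : Const} (h : nonFresh c) : ¬ isFresh c := by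
  rcases h with ⟨n, rfl⟩; rintro ⟨m, hm⟩; exact Sum.inl_ne_inr hm

lemma fresh_of_not_nf {c : Const} (h : ¬ nonFresh c) : isFresh c :=
  (const_cases c).resolve_left h

lemma nf_of_not_fresh {c : Const} (h : ¬ isFresh c) : nonFresh c :=
  (const_cases c).resolve_right h

/-- Atom `t` has only non-fresh arguments. -/
def NFat (t : Atom) : Prop := ∀ c ∈ t.args, nonFresh c

/-- `c` is a "member" (non-anchor fresh argument) of atom `t` w.r.t. anchoring `A`. -/
def MstP (A : Atom → Const) (t : Atom) (c : Const) : Prop :=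
  c ∈ t.args ∧ isFresh c ∧ c ≠ A t

/-- `t` is a well-anchored atom w.r.t. `A`, inside instance `S`. -/
def GoodAt (S : DB) (A : Atom → Const) (t : Atom) : Prop :=
  A t ∈ t.args ∧ (∀ c ∈ t.args, nonFresh c → c = A t) ∧
  ∀ s ∈ S, ∀ c, MstP A t c → MstP A s c →
    A s = A t ∧ (∀ d, MstP A s d ↔ MstP A t d)

def INVs (S : DB) : Prop := ∃ A : Atom → Const, ∀ t ∈ S, NFat t ∨ GoodAt S A t

def FI (ar : String → ℕ) (S : DB) : Prop :=
  (∀ t ∈ S, t.args.length = ar t.rel) ∧ INVs S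

lemma tri_of_INV {S : DB} (h : INVs S) :
    ∀ a ∈ S, (∀ c ∈ a.args, nonFresh c) ∨ (∀ c ∈ a.args, isFresh c) ∨
      (∃ c : Const, nonFresh c ∧ c ∈ a.args ∧ ∀ x ∈ a.args, isFresh x ∨ x = c) := by
  rcases h with ⟨A, hA⟩
  intro a ha
  rcases hA a ha with hnf | hG
  · exact Or.inl hnf
  · by_cases hex : ∃ c ∈ a.args, nonFresh c
    · rcases hex with ⟨c, hc, hcnf⟩
      have hcA : c = A a := hG.2.1 c hc hcnf
      refine Or.inr (Or.inr ⟨A a, hcA ▸ hcnf, hG.1, ?_⟩)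
      intro x hx
      rcases const_cases x with hx1 | hx1
      · exact Or.inr (hG.2.1 x hx hx1)
      · exact Or.inl hx1
    · push_neg at hex
      exact Or.inr (Or.inl fun c hc => fresh_of_not_nf (hex c hc))

lemma mem_mapAtom_args {μ : Const → Const} {t : Atom} {c : Const} :
    c ∈ (mapAtom μ t).args ↔ ∃ x ∈ t.args, μ x = c := by
  simp [mapAtom]

lemma NFat_map_of_NFat {μ : Const → Const} (hfix : ∀ c, ¬ isFresh c → μ c = c)
    {t : Atom} (h : NFat t) : NFat (mapAtom μ t) := by
  intro c hc
  rcases mem_mapAtom_args.mp hc with ⟨x, hx, rfl⟩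
  rw [hfix x (nf_not_fresh (h x hx))]
  exact h x hx

lemma mapAtom_eq_self {μ : Const → Const} (hfix : ∀ c, ¬ isFresh c → μ c = c)
    {t : Atom} (h : NFat t) : mapAtom μ t = t := by
  rcases t with ⟨r, l⟩
  simp only [mapAtom, GAtom.mk.injEq, true_and]
  rw [List.map_congr_left, List.map_id']
  intro x hx
  exact hfix x (nf_not_fresh (h x hx))


/-- members of the image atom w.r.t. the recipe anchor of the preimage -/
def MMP (μ : Const → Const) (anc : Atom → Const) (t : Atom) (c : Const) : Prop :=
  c ∈ (mapAtom μ t).args ∧ isFresh c ∧ c ≠ anc t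

lemma assembleINV (S : DB) (μ : Const → Const) (anc : Atom → Const)
    (hfix : ∀ c, ¬ isFresh c → μ c = c)
    (hP : ∀ t ∈ S, ¬ NFat (mapAtom μ t) →
      anc t ∈ (mapAtom μ t).args ∧
      (∀ c ∈ (mapAtom μ t).args, nonFresh c → c = anc t) ∧
      (∀ s ∈ S, ∀ c, MMP μ anc t c → MMP μ anc s c →
        anc s = anc t ∧ (∀ d, MMP μ anc s d ↔ MMP μ anc t d))) :
    INVs (mapAtom μ '' S) := by
  classical
  refine ⟨fun u => if h : ∃ t, t ∈ S ∧ ¬ NFat (mapAtom μ t) ∧ mapAtom μ t = u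
      then anc h.choose else Sum.inl 0, ?_⟩
  intro u hu
  rcases hu with ⟨t₀, ht₀, rfl⟩
  set A' : Atom → Const := fun u => if h : ∃ t, t ∈ S ∧ ¬ NFat (mapAtom μ t) ∧ mapAtom μ t = u
      then anc h.choose else Sum.inl 0 with hA'def
  by_cases hnf : NFat (mapAtom μ t₀)
  · exact Or.inl hnf
  · right
    have hex : ∃ t, t ∈ S ∧ ¬ NFat (mapAtom μ t) ∧ mapAtom μ t = mapAtom μ t₀ :=
      ⟨t₀, ht₀, hnf, rfl⟩
    have hA'u : A' (mapAtom μ t₀) = anc hex.choose := by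
      simp only [hA'def, dif_pos hex]
    obtain ⟨ht₁S, ht₁nf, ht₁eq⟩ := hex.choose_spec
    set t₁ := hex.choose
    obtain ⟨o1, o2, o3⟩ := hP t₁ ht₁S ht₁nf
    have hMst : ∀ c, MstP A' (mapAtom μ t₀) c ↔ MMP μ anc t₁ c := by
      intro c
      simp only [MstP, MMP, hA'u, ht₁eq]
    refine ⟨?_, ?_, ?_⟩
    · rw [hA'u]; rw [← ht₁eq]; exact o1
    · intro c hc hcnf
      rw [hA'u]
      exact o2 c (ht₁eq ▸ hc) hcnf
    · intro s' hs' c hc1 hc2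
      rcases hs' with ⟨s₀, hs₀, rfl⟩
      by_cases hex2 : ∃ t, t ∈ S ∧ ¬ NFat (mapAtom μ t) ∧ mapAtom μ t = mapAtom μ s₀
      · have hA's : A' (mapAtom μ s₀) = anc hex2.choose := by
          simp only [hA'def, dif_pos hex2]
        obtain ⟨hs₁S, hs₁nf, hs₁eq⟩ := hex2.choose_spec
        set s₁ := hex2.choose
        have hMsts : ∀ c, MstP A' (mapAtom μ s₀) c ↔ MMP μ anc s₁ c := by
          intro c
          simp only [MstP, MMP, hA's, hs₁eq]
        have := o3 s₁ hs₁S c ((hMst c).mp hc1) ((hMsts c).mp hc2)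
        constructor
        · rw [hA's, hA'u]; exact this.1
        · intro d; rw [hMsts d, hMst d]; exact this.2 d
      · exfalso
        have hnf' : NFat (mapAtom μ s₀) := by
          by_contra hcon
          exact hex2 ⟨s₀, hs₀, hcon, rfl⟩
        rcases hc2 with ⟨hmem, hfr, _⟩
        exact nf_not_fresh (hnf' c hmem) hfr


lemma INV_extend (S : DB) (A : Atom → Const) (hA : ∀ t ∈ S, NFat t ∨ GoodAt S A t)
    (b : Atom) (vb : Const) (hvb : vb ∈ b.args)
    (hC2 : ∀ c ∈ b.args, nonFresh c → c = vb)
    (hnew : ∀ c, c ∈ b.args → isFresh c → c ≠ vb → ¬ occursC c S) :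
    INVs (S ∪ {b}) := by
  classical
  refine ⟨fun t => if t = b then vb else A t, ?_⟩
  set A' : Atom → Const := fun t => if t = b then vb else A t with hA'def
  have hA'b : A' b = vb := by simp [hA'def]
  have hbGood : GoodAt (S ∪ {b}) A' b := by
    refine ⟨hA'b ▸ hvb, ?_, ?_⟩
    · intro c hc hcnf; rw [hA'b]; exact hC2 c hc hcnf
    · intro s hs c hc1 hc2
      rcases hc1 with ⟨hcb, hcf, hcvb⟩
      rw [hA'b] at hcvb
      by_cases hsb : s = b
      · subst hsb; exact ⟨rfl, fun d => Iff.rfl⟩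
      · exfalso
        rcases hs with hs | hs
        · exact hnew c hcb hcf hcvb ⟨s, hs, hc2.1⟩
        · exact hsb hs
  intro t ht
  rcases ht with ht | ht
  · by_cases htb : t = b
    · subst htb; exact Or.inr hbGood
    · rcases hA t ht with hnf | hG
      · exact Or.inl hnf
      · right
        have hA't : A' t = A t := by simp [hA'def, htb]
        have hMt : ∀ d, MstP A' t d ↔ MstP A t d := by
          intro d; simp [MstP, hA't]
        refine ⟨hA't ▸ hG.1, ?_, ?_⟩
        · intro c hc hcnf; rw [hA't]; exact hG.2.1 c hc hcnf
        · intro s hs c hc1 hc2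
          by_cases hsb : s = b
          · exfalso
            subst hsb
            rcases hc2 with ⟨hcb, hcf, hcvb⟩
            rw [hA'b] at hcvb
            exact hnew c hcb hcf hcvb ⟨t, ht, ((hMt c).mp hc1).1⟩
          · have hsS : s ∈ S := by
              rcases hs with hs | hs
              · exact hs
              · exact absurd hs hsb
            have hA's : A' s = A s := by simp [hA'def, hsb]
            have hMs : ∀ d, MstP A' s d ↔ MstP A s d := by
              intro d; simp [MstP, hA's]
            have := hG.2.2 s hsS c ((hMt c).mp hc1) ((hMs c).mp hc2)
            exact ⟨by rw [hA's, hA't]; exact this.1,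
              fun d => by rw [hMs d, hMt d]; exact this.2 d⟩
  · right
    have : t = b := ht
    subst this
    exact hbGood

lemma INV_extend_perm (S : DB) (A : Atom → Const) (hA : ∀ t ∈ S, NFat t ∨ GoodAt S A t)
    (a b : Atom) (ha : a ∈ S)
    (hargs : ∀ x, x ∈ b.args ↔ x ∈ a.args) :
    INVs (S ∪ {b}) := by
  classical
  rcases hA a ha with hanf | haG
  · -- b is all non-fresh as well; every atom of S ∪ {b} keeps its old status
    refine ⟨A, ?_⟩
    have hbnf : NFat b := fun c hc => hanf c ((hargs c).mp hc)
    intro t ht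
    have htb : t ∈ S ∨ t = b := ht
    rcases htb with htS | rfl
    · rcases hA t htS with hnf | hG
      · exact Or.inl hnf
      · right
        refine ⟨hG.1, hG.2.1, ?_⟩
        intro s hs c hc1 hc2
        rcases hs with hsS | hsb
        · exact hG.2.2 s hsS c hc1 hc2
        · exfalso
          have : s = b := hsb
          subst this
          exact nf_not_fresh (hbnf c hc2.1) hc2.2.1
    · exact Or.inl hbnf
  · refine ⟨fun t => if t = b then A a else A t, ?_⟩
    set A' : Atom → Const := fun t => if t = b then A a else A t with hA'def
    have hA'b : A' b = A a := by simp [hA'def]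
    have hMb : ∀ d, MstP A' b d ↔ MstP A a d := by
      intro d; simp only [MstP, hA'b, hargs]
    have hbGood : GoodAt (S ∪ {b}) A' b := by
      refine ⟨hA'b ▸ ((hargs (A a)).mpr haG.1), ?_, ?_⟩
      · intro c hc hcnf; rw [hA'b]; exact haG.2.1 c ((hargs c).mp hc) hcnf
      · intro s hs c hc1 hc2
        by_cases hsb : s = b
        · subst hsb; exact ⟨rfl, fun d => Iff.rfl⟩
        · have hsS : s ∈ S := by
            rcases hs with hs | hs
            · exact hs
            · exact absurd hs hsb
          have hA's : A' s = A s := by simp [hA'def, hsb]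
          have hMs : ∀ d, MstP A' s d ↔ MstP A s d := by
            intro d; simp [MstP, hA's]
          have := haG.2.2 s hsS c ((hMb c).mp hc1) ((hMs c).mp hc2)
          exact ⟨by rw [hA's, hA'b]; exact this.1,
            fun d => by rw [hMs d, hMb d]; exact this.2 d⟩
    intro t ht
    have htb : t ∈ S ∨ t = b := ht
    rcases htb with htS | rfl
    · by_cases htb : t = b
      · subst htb; exact Or.inr hbGood
      · rcases hA t htS with hnf | hG
        · exact Or.inl hnf
        · right
          have hA't : A' t = A t := by simp [hA'def, htb]
          have hMt : ∀ d, MstP A' t d ↔ MstP A t d := by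
            intro d; simp [MstP, hA't]
          refine ⟨hA't ▸ hG.1, ?_, ?_⟩
          · intro c hc hcnf; rw [hA't]; exact hG.2.1 c hc hcnf
          · intro s hs c hc1 hc2
            by_cases hsb : s = b
            · subst hsb
              have := hG.2.2 a ha c ((hMt c).mp hc1) ((hMb c).mp hc2)
              exact ⟨by rw [hA'b, hA't]; exact this.1.symm ▸ this.1,
                fun d => by rw [hMb d, hMt d]; exact this.2 d⟩
            · have hsS : s ∈ S := by
                rcases hs with hs | hs
                · exact hs
                · exact absurd hs hsb
              have hA's : A' s = A s := by simp [hA'def, hsb]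
              have hMs : ∀ d, MstP A' s d ↔ MstP A s d := by
                intro d; simp [MstP, hA's]
              have := hG.2.2 s hsS c ((hMt c).mp hc1) ((hMs c).mp hc2)
              exact ⟨by rw [hA's, hA't]; exact this.1,
                fun d => by rw [hMs d, hMt d]; exact this.2 d⟩
    · exact Or.inr hbGood


lemma get?_eq_some_of_lt {α : Type*} {l : List α} {i : ℕ} (h : i < l.length) :
    ∃ v, l[i]? = some v := by
  cases hv : l[i]? with
  | none => exact absurd (List.getElem?_eq_none_iff.mp hv) (by omega)
  | some v => exact ⟨v, rfl⟩

lemma ID_pres (G : EERSig) (Sg : Deps) (S S' : DB)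
    (hCD : CDshaped G Sg) (hFI : FI G.ar S) (hstep : IDStep G.ar Sg S S') :
    FI G.ar S' := by
  classical
  obtain ⟨σ, hσ, a, ha, harel, -, b, hbrel, hblen, hproj, hfresh, -, hS'⟩ := hstep
  obtain ⟨hlen, A, hA⟩ := hFI
  subst hS'
  constructor
  · intro t ht
    have : t ∈ S ∨ t = b := ht
    rcases this with ht | rfl
    · exact hlen t ht
    · rw [hbrel]; exact hblen
  · -- INVs
    rcases hCD.2.2.2.1 σ hσ with hsh | hsh | hsh | hsh
    · -- E → E : arity 1
      obtain ⟨-, hr2, -, -⟩ := hsh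
      have h1 : b.args.length = 1 := by rw [hblen, hCD.1 σ.r2 hr2]
      obtain ⟨v, hv⟩ := List.length_eq_one_iff.mp h1
      refine INV_extend S A hA b v (by rw [hv]; exact List.mem_singleton_self v) ?_ ?_
      · intro c hc _; rw [hv] at hc; exact List.mem_singleton.mp hc
      · intro c hc _ hcv; rw [hv] at hc; exact absurd (List.mem_singleton.mp hc) hcv
    · -- E → R
      obtain ⟨-, -, hX, i, hilt, hY⟩ := hsh
      rw [hX, hY] at hproj
      simp only [projT, List.map_cons, List.map_nil, List.cons.injEq, and_true] at hproj
      have hilt' : i < b.args.length := by rw [hblen]; exact hilt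
      obtain ⟨v, hv⟩ := get?_eq_some_of_lt hilt'
      have hvmem : v ∈ b.args := List.mem_of_getElem? hv
      have hC2 : ∀ c ∈ b.args, nonFresh c → c = v := by
        intro c hc hcnf
        obtain ⟨j, hj⟩ := List.mem_iff_getElem?.mp hc
        have hjlt : j < b.args.length := by
          by_contra hcon
          rw [List.getElem?_eq_none_iff.mpr (by omega)] at hj
          exact nomatch hj
        by_cases hji : j = i
        · subst hji; rw [hv] at hj; exact Option.some.inj hj.symm ▸ rfl
        · exfalso
          have hjY : j ∉ σ.Y := by rw [hY]; simp [hji]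
          obtain ⟨c', hc', hc'f, -⟩ := hfresh j hjlt hjY
          rw [hj] at hc'
          exact nf_not_fresh hcnf (Option.some.inj hc' ▸ hc'f)
      refine INV_extend S A hA b v hvmem hC2 ?_
      intro c hc hcf hcv
      obtain ⟨j, hj⟩ := List.mem_iff_getElem?.mp hc
      have hjlt : j < b.args.length := by
        by_contra hcon
        rw [List.getElem?_eq_none_iff.mpr (by omega)] at hj
        exact nomatch hj
      by_cases hji : j = i
      · exact absurd (by subst hji; rw [hv] at hj; exact (Option.some.inj hj).symm) hcv
      · have hjY : j ∉ σ.Y := by rw [hY]; simp [hji]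
        obtain ⟨c', hc', -, hc'occ⟩ := hfresh j hjlt hjY
        rw [hj] at hc'
        exact (Option.some.inj hc') ▸ hc'occ
    · -- R → E : arity 1
      obtain ⟨-, hr2, -, -⟩ := hsh
      have h1 : b.args.length = 1 := by rw [hblen, hCD.1 σ.r2 hr2]
      obtain ⟨v, hv⟩ := List.length_eq_one_iff.mp h1
      refine INV_extend S A hA b v (by rw [hv]; exact List.mem_singleton_self v) ?_ ?_
      · intro c hc _; rw [hv] at hc; exact List.mem_singleton.mp hc
      · intro c hc _ hcv; rw [hv] at hc; exact absurd (List.mem_singleton.mp hc) hcv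
    · -- R → R : full permutation
      obtain ⟨-, -, har12, hX, hperm⟩ := hsh
      set n := G.ar σ.r1 with hn
      have halen : a.args.length = n := by rw [hn, ← harel]; exact hlen a ha
      have hblen' : b.args.length = n := by rw [hblen, ← har12]
      have hYlen : σ.Y.length = n := by
        rw [hperm.length_eq, List.length_range]
      rw [hX] at hproj
      -- basic transfer: for m < n and Y[m]? = some j, a.args[m]? = b.args[j]?
      have htrans : ∀ m j, m < n → σ.Y[m]? = some j → a.args[m]? = b.args[j]? := by
        intro m j hm hYm
        unfold projT at hproj
        have h1 : (List.map (fun x => a.args[x]?) (List.range n))[m]? = some (a.args[m]?) := by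
          rw [List.getElem?_map, List.getElem?_range hm]; rfl
        have h2 : (List.map (fun x => b.args[x]?) σ.Y)[m]? = some (b.args[j]?) := by
          rw [List.getElem?_map, hYm]; rfl
        rw [hproj, h2] at h1
        exact (Option.some.inj h1).symm
      have hargs : ∀ x, x ∈ b.args ↔ x ∈ a.args := by
        intro x
        constructor
        · intro hx
          obtain ⟨j, hj⟩ := List.mem_iff_getElem?.mp hx
          have hjlt : j < n := by
            by_contra hcon
            rw [List.getElem?_eq_none_iff.mpr (by omega)] at hj
            exact nomatch hj
          have hjY : j ∈ σ.Y := hperm.mem_iff.mpr (List.mem_range.mpr hjlt)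
          obtain ⟨m, hm⟩ := List.mem_iff_getElem?.mp hjY
          have hmlt : m < n := by
            by_contra hcon
            rw [List.getElem?_eq_none_iff.mpr (by omega)] at hm
            exact nomatch hm
          have := htrans m j hmlt hm
          rw [hj] at this
          exact List.mem_of_getElem? this
        · intro hx
          obtain ⟨m, hm⟩ := List.mem_iff_getElem?.mp hx
          have hmlt : m < n := by
            by_contra hcon
            rw [List.getElem?_eq_none_iff.mpr (by omega)] at hm
            exact nomatch hm
          have hmY : m < σ.Y.length := by omega
          obtain ⟨j, hj⟩ := get?_eq_some_of_lt hmY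
          have := htrans m j hmlt hj
          rw [hm] at this
          exact List.mem_of_getElem? this.symm
      exact INV_extend_perm S A hA a b ha hargs


/-- Case I of the KD rule: one side of the merged pair is all-non-fresh. -/
lemma caseI_per (S : DB) (A : Atom → Const) (μ : Const → Const) (b : Atom)
    (hA : ∀ t ∈ S, NFat t ∨ GoodAt S A t)
    (hfix : ∀ c, ¬ isFresh c → μ c = c)
    (hchb : ∀ c, μ c ≠ c → isFresh c ∧ c ∈ b.args)
    (hAbnf : nonFresh (A b))
    (hGb : GoodAt S A b)
    (hb : b ∈ S)
    (hI1 : ∀ x ∈ b.args, nonFresh (μ x)) :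
    ∀ t ∈ S, ¬ NFat (mapAtom μ t) →
      μ (A t) ∈ (mapAtom μ t).args ∧
      (∀ c ∈ (mapAtom μ t).args, nonFresh c → c = μ (A t)) ∧
      (∀ c, (c ∈ (mapAtom μ t).args ∧ isFresh c ∧ c ≠ μ (A t)) ↔ MstP A t c) ∧
      GoodAt S A t := by
  intro t ht hnf
  have hnft : ¬ NFat t := fun h => hnf (NFat_map_of_NFat hfix h)
  have hGt : GoodAt S A t := (hA t ht).resolve_left hnft
  -- t's members are disjoint from b's members
  have hnoA : ∀ c, MstP A t c → MstP A b c → False := by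
    intro c hc1 hc2
    obtain ⟨hABt, hMeq⟩ := hGt.2.2 b hb c hc1 hc2
    apply hnf
    intro d hd
    rcases mem_mapAtom_args.mp hd with ⟨x, hx, rfl⟩
    rcases const_cases x with hx1 | hx1
    · rw [hfix x (nf_not_fresh hx1)]; exact hx1
    · -- x fresh argument of t: x = A t (impossible: A t = A b nonfresh) or member
      by_cases hxA : x = A t
      · refine absurd hx1 (nf_not_fresh ?_)
        rw [hxA, ← hABt]; exact hAbnf
      · have hxM : MstP A b x := (hMeq x).mpr ⟨hx, hx1, hxA⟩
        exact hI1 x hxM.1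
  have hunch : ∀ x ∈ t.args, x ≠ A t → μ x = x := by
    intro x hx hxA
    by_contra hch
    obtain ⟨hxf, hxb⟩ := hchb x hch
    exact hnoA x ⟨hx, hxf, hxA⟩ ⟨hxb, hxf, fun h => nf_not_fresh (h ▸ hAbnf) hxf⟩
  refine ⟨mem_mapAtom_args.mpr ⟨A t, hGt.1, rfl⟩, ?_, ?_, hGt⟩
  · intro c hc hcnf
    rcases mem_mapAtom_args.mp hc with ⟨x, hx, rfl⟩
    by_cases hxA : x = A t
    · rw [hxA]
    · rw [hunch x hx hxA] at hcnf ⊢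
      exact absurd (hGt.2.1 x hx hcnf) hxA
  · intro c
    constructor
    · rintro ⟨hc, hcf, hcA⟩
      rcases mem_mapAtom_args.mp hc with ⟨x, hx, rfl⟩
      by_cases hxA : x = A t
      · exact absurd (hxA ▸ rfl) hcA
      · rw [hunch x hx hxA] at hcf hcA ⊢
        exact ⟨hx, hcf, hxA⟩
    · rintro ⟨hc, hcf, hcA⟩
      have hcu : μ c = c := hunch c hc hcA
      refine ⟨mem_mapAtom_args.mpr ⟨c, hc, hcu⟩, hcf, ?_⟩
      by_cases hAch : μ (A t) = A t
      · rw [hAch]; exact hcA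
      · obtain ⟨hAf, hAb⟩ := hchb (A t) hAch
        have hAbM : MstP A b (A t) := ⟨hAb, hAf, fun h => nf_not_fresh (h ▸ hAbnf) hAf⟩
        intro hcon
        exact nf_not_fresh (hcon ▸ hI1 (A t) hAb) hcf
  

lemma caseII (S : DB) (A : Atom → Const) (μ : Const → Const) (a b : Atom)
    (hA : ∀ t ∈ S, NFat t ∨ GoodAt S A t)
    (ha : a ∈ S) (hb : b ∈ S)
    (hGa : GoodAt S A a) (hGb : GoodAt S A b)
    (hfix : ∀ c, ¬ isFresh c → μ c = c)
    (hmlists : a.args.map μ = b.args.map μ)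
    (hch : ∀ c, μ c ≠ c → isFresh c ∧ ((c ∈ a.args ∧ μ c ∈ b.args) ∨ (c ∈ b.args ∧ μ c ∈ a.args)))
    (hfixt : ∀ c, μ c ≠ c → μ (μ c) = μ c)
    (k : Const) (hka : k ∈ a.args) (hkb : k ∈ b.args) :
    INVs (mapAtom μ '' S) := by
  classical
  have hcases : ∀ t, GoodAt S A t → ∀ x ∈ t.args, x = A t ∨ MstP A t x := by
    intro t hGt x hx
    rcases const_cases x with h | h
    · exact Or.inl (hGt.2.1 x hx h)
    · by_cases hxA : x = A t
      · exact Or.inl hxA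
      · exact Or.inr ⟨hx, h, hxA⟩
  have hargsIff : ∀ t, GoodAt S A t → ∀ x, x ∈ t.args ↔ (x = A t ∨ MstP A t x) := by
    intro t hGt x
    refine ⟨hcases t hGt x, ?_⟩
    rintro (rfl | hx)
    · exact hGt.1
    · exact hx.1
  have hL1 : ¬ MstP A b (A a) → ¬ MstP A a (A b) → (A b) = (A a) := by
    intro h1 h2
    rcases hcases a hGa k hka with hk1 | hk1 <;> rcases hcases b hGb k hkb with hk2 | hk2
    · rw [← hk1, ← hk2]
    · exact absurd (hk1 ▸ hk2) h1
    · exact absurd (hk2 ▸ hk1) h2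
    · exact (hGa.2.2 b hb k hk1 hk2).1
  set Cab := MstP A b (A a) with hCabdef
  set αs : Const := if Cab then (A b) else (A a) with hαsdef
  have hsplit : (Cab ∧ αs = (A b)) ∨ (¬ Cab ∧ αs = (A a)) := by
    by_cases h : Cab
    · left; exact ⟨h, by rw [hαsdef, if_pos h]⟩
    · right; exact ⟨h, by rw [hαsdef, if_neg h]⟩
  have hαsargs : αs ∈ a.args ∨ αs ∈ b.args := by
    rcases hsplit with ⟨-, h⟩ | ⟨-, h⟩
    · rw [h]; exact Or.inr hGb.1
    · rw [h]; exact Or.inl hGa.1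
  have hNF1 : ∀ x, (x ∈ a.args ∨ x ∈ b.args) → nonFresh x → x = αs := by
    intro x hx hxnf
    have hx' : x = (A a) ∨ x = (A b) := by
      rcases hx with h | h
      · exact Or.inl (hGa.2.1 x h hxnf)
      · exact Or.inr (hGb.2.1 x h hxnf)
    rcases hsplit with ⟨hc, hs⟩ | ⟨hc, hs⟩
    · rcases hx' with rfl | rfl
      · exact absurd hc.2.1 (nf_not_fresh hxnf)
      · exact hs.symm
    · rcases hx' with rfl | rfl
      · exact hs.symm
      · by_cases hba : MstP A a (A b)
        · exact absurd hba.2.1 (nf_not_fresh hxnf)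
        · rw [hs]; exact hL1 hc hba
  have hclass : ∀ c, μ c ≠ c → MstP A a c ∨ MstP A b c ∨ c = (A a) ∨ c = (A b) := by
    intro c hc
    rcases (hch c hc).2 with ⟨h, -⟩ | ⟨h, -⟩
    · rcases hcases a hGa c h with h' | h'
      · exact Or.inr (Or.inr (Or.inl h'))
      · exact Or.inl h'
    · rcases hcases b hGb c h with h' | h'
      · exact Or.inr (Or.inr (Or.inr h'))
      · exact Or.inr (Or.inl h')
  have htarg : ∀ c, μ c ≠ c → μ c ∈ a.args ∨ μ c ∈ b.args := by
    intro c hc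
    rcases (hch c hc).2 with ⟨-, h⟩ | ⟨-, h⟩
    · exact Or.inr h
    · exact Or.inl h
  have htargC : ∀ c, μ c ≠ c → MstP A a (μ c) ∨ MstP A b (μ c) ∨ μ c = (A a) ∨ μ c = (A b) := by
    intro c hc
    rcases htarg c hc with h | h
    · rcases hcases a hGa _ h with h' | h'
      · exact Or.inr (Or.inr (Or.inl h'))
      · exact Or.inl h'
    · rcases hcases b hGb _ h with h' | h'
      · exact Or.inr (Or.inr (Or.inr h'))
      · exact Or.inr (Or.inl h')
  set Acl : Atom → Prop :=
    fun t => t = a ∨ t = b ∨ ∃ c, MstP A t c ∧ (MstP A a c ∨ MstP A b c) with hAcldef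
  set anc : Atom → Const := fun t => if Acl t then μ αs else μ (A t) with hancdef
  have hancP : ∀ t, Acl t → anc t = μ αs := by
    intro t h; rw [hancdef]; exact if_pos h
  have hancN : ∀ t, ¬ Acl t → anc t = μ (A t) := by
    intro t h; rw [hancdef]; exact if_neg h
  have himargs : ∀ (t s : Atom), (∀ y, y ∈ t.args ↔ y ∈ s.args) →
      ∀ x, x ∈ (mapAtom μ t).args ↔ x ∈ (mapAtom μ s).args := by
    intro t s h x
    rw [mem_mapAtom_args, mem_mapAtom_args]
    exact ⟨fun ⟨y, hy, hxy⟩ => ⟨y, (h y).mp hy, hxy⟩,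
           fun ⟨y, hy, hxy⟩ => ⟨y, (h y).mpr hy, hxy⟩⟩
  have hUb : ∀ x, x ∈ (mapAtom μ b).args ↔ x ∈ (mapAtom μ a).args := by
    intro x
    show x ∈ b.args.map μ ↔ x ∈ a.args.map μ
    rw [hmlists]
  have hUset : ∀ t, t ∈ S → GoodAt S A t → Acl t →
      ∀ x, x ∈ (mapAtom μ t).args ↔ x ∈ (mapAtom μ a).args := by
    intro t ht hGt hAt x
    rcases hAt with rfl | rfl | ⟨c, hct, hcab⟩
    · exact Iff.rfl
    · exact hUb x
    · rcases hcab with hcA | hcB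
      · obtain ⟨hAeq, hMeq⟩ := hGt.2.2 a ha c hct hcA
        refine himargs t a ?_ x
        intro y
        rw [hargsIff t hGt y, hargsIff a hGa y, hAeq]
        exact or_congr Iff.rfl (hMeq y).symm
      · obtain ⟨hAeq, hMeq⟩ := hGt.2.2 b hb c hct hcB
        refine Iff.trans (himargs t b ?_ x) (hUb x)
        intro y
        rw [hargsIff t hGt y, hargsIff b hGb y, hAeq]
        exact or_congr Iff.rfl (hMeq y).symm
  -- the key impossibility lemma
  have hNOX : ∀ s ∈ S, GoodAt S A s → ¬ Acl s → ∀ c,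
      c ∈ (mapAtom μ s).args → isFresh c → c ≠ anc s → c ≠ μ αs →
      c ∈ (mapAtom μ a).args → False := by
    intro s hs hGs hAs c hcmem hcf hcanc hcμ hcA
    rcases mem_mapAtom_args.mp hcmem with ⟨y₀, hy₀, hy₀c⟩
    rcases hcases s hGs y₀ hy₀ with hy₀A | hyM
    · exact hcanc (by rw [hancN s hAs, ← hy₀c, hy₀A])
    rcases mem_mapAtom_args.mp hcA with ⟨x, hx, hxc⟩
    have hcfix : μ c = c := by
      by_cases hxu : μ x = x
      · rw [← hxc, hxu, hxu]
      · rw [← hxc]; exact hfixt x hxu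
    have hcl : MstP A a c ∨ MstP A b c ∨ c = (A a) ∨ c = (A b) := by
      by_cases hxu : μ x = x
      · have : c = x := by rw [← hxc, hxu]
        subst this
        rcases hcases a hGa c hx with h | h
        · exact Or.inr (Or.inr (Or.inl h))
        · exact Or.inl h
      · rw [← hxc]; exact htargC x hxu
    by_cases hyu : μ y₀ = y₀
    · have hyc : y₀ = c := by rw [← hy₀c, hyu]
      subst hyc
      rcases hcl with h | h | h | h
      · exact hAs (Or.inr (Or.inr ⟨y₀, hyM, Or.inl h⟩))
      · exact hAs (Or.inr (Or.inr ⟨y₀, hyM, Or.inr h⟩))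
      · rcases hsplit with ⟨hc, -⟩ | ⟨-, hsα⟩
        · exact hAs (Or.inr (Or.inr ⟨y₀, hyM, Or.inr (h ▸ hc)⟩))
        · exact hcμ (by rw [← hsα] at h; rw [← h]; exact hcfix.symm)
      · rcases hsplit with ⟨-, hsα⟩ | ⟨hc, hsα⟩
        · exact hcμ (by rw [← hsα] at h; rw [← h]; exact hcfix.symm)
        · by_cases hba : MstP A a (A b)
          · exact hAs (Or.inr (Or.inr ⟨y₀, hyM, Or.inl (h ▸ hba)⟩))
          · have : y₀ = αs := by rw [h, hL1 hc hba, ← hsα]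
            exact hcμ (by rw [← hy₀c, this])
    · rcases hclass y₀ hyu with h | h | h | h
      · exact hAs (Or.inr (Or.inr ⟨y₀, hyM, Or.inl h⟩))
      · exact hAs (Or.inr (Or.inr ⟨y₀, hyM, Or.inr h⟩))
      · rcases hsplit with ⟨hc, -⟩ | ⟨-, hsα⟩
        · exact hAs (Or.inr (Or.inr ⟨y₀, hyM, Or.inr (h ▸ hc)⟩))
        · exact hcμ (by rw [← hy₀c, h, hsα])
      · rcases hsplit with ⟨-, hsα⟩ | ⟨hc, hsα⟩
        · exact hcμ (by rw [← hy₀c, h, hsα])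
        · by_cases hba : MstP A a (A b)
          · exact hAs (Or.inr (Or.inr ⟨y₀, hyM, Or.inl (h ▸ hba)⟩))
          · exact hcμ (by rw [← hy₀c, h, hL1 hc hba, hsα])
  -- non-Acl atoms: members other than αs are untouched
  have hmm : ∀ u, ¬ Acl u → ∀ y, MstP A u y → y ≠ αs → μ y = y := by
    intro u hAu y hy hyα
    by_contra hch'
    rcases hclass y hch' with h | h | h | h
    · exact hAu (Or.inr (Or.inr ⟨y, hy, Or.inl h⟩))
    · exact hAu (Or.inr (Or.inr ⟨y, hy, Or.inr h⟩))
    · rcases hsplit with ⟨hc, -⟩ | ⟨-, hsα⟩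
      · exact hAu (Or.inr (Or.inr ⟨y, hy, Or.inr (h ▸ hc)⟩))
      · exact hyα (h.trans hsα.symm)
    · rcases hsplit with ⟨-, hsα⟩ | ⟨hc, hsα⟩
      · exact hyα (h.trans hsα.symm)
      · by_cases hba : MstP A a (A b)
        · exact hAu (Or.inr (Or.inr ⟨y, hy, Or.inl (h ▸ hba)⟩))
        · exact hyα (h.trans ((hL1 hc hba).trans hsα.symm))
  -- extract a member preimage
  have hMBC : ∀ u, GoodAt S A u → ¬ Acl u → ∀ c, MMP μ anc u c →
      ∃ y, MstP A u y ∧ μ y = c := by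
    intro u hGu hAu c hc
    rcases mem_mapAtom_args.mp hc.1 with ⟨x, hx, hxc⟩
    rcases hcases u hGu x hx with hxA | hxM
    · exact absurd (by rw [hancN u hAu, ← hxc, hxA]) hc.2.2.symm
    · exact ⟨x, hxM, hxc⟩
  refine assembleINV S μ anc hfix ?_
  intro t ht hnf
  have hnft : ¬ NFat t := fun h => hnf (NFat_map_of_NFat hfix h)
  have hGt : GoodAt S A t := (hA t ht).resolve_left hnft
  by_cases hAt : Acl t
  · -- A-class
    have hanct : anc t = μ αs := hancP t hAt
    have hUt := hUset t ht hGt hAt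
    refine ⟨?_, ?_, ?_⟩
    · rw [hanct]
      refine (hUt _).mpr ?_
      rcases hαsargs with h | h
      · exact mem_mapAtom_args.mpr ⟨αs, h, rfl⟩
      · exact (hUb _).mp (mem_mapAtom_args.mpr ⟨αs, h, rfl⟩)
    · intro c hc hcnf
      rw [hanct]
      rcases mem_mapAtom_args.mp ((hUt c).mp hc) with ⟨x, hx, hxc⟩
      by_cases hxu : μ x = x
      · have hcx : c = x := by rw [← hxc, hxu]
        have : x = αs := hNF1 x (Or.inl hx) (hcx ▸ hcnf)
        rw [hcx, this, hfix αs]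
        rw [← this, ← hcx]
        exact nf_not_fresh hcnf
      · have : μ x = αs := hNF1 (μ x) (htarg x hxu) (hxc ▸ hcnf)
        rw [← hxc, ← this, hfixt x hxu]
    · intro s hs c hc1 hc2
      obtain ⟨hc1m, hc1f, hc1a⟩ := hc1
      rw [hanct] at hc1a
      have hcA : c ∈ (mapAtom μ a).args := (hUt c).mp hc1m
      by_cases hnfs : NFat s
      · exact absurd (NFat_map_of_NFat hfix hnfs c hc2.1) (nf_not_fresh · hc1f)
      have hGs : GoodAt S A s := (hA s hs).resolve_left hnfs
      by_cases hAs : Acl s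
      · have hancs : anc s = μ αs := hancP s hAs
        have hUs := hUset s hs hGs hAs
        refine ⟨by rw [hancs, hanct], ?_⟩
        intro d
        show d ∈ (mapAtom μ s).args ∧ isFresh d ∧ d ≠ anc s ↔
             d ∈ (mapAtom μ t).args ∧ isFresh d ∧ d ≠ anc t
        rw [hancs, hanct, hUs d, hUt d]
      · exact absurd (hNOX s hs hGs hAs c hc2.1 hc1f hc2.2.2 hc1a hcA) not_false
  · -- B/C-class
    have hanct : anc t = μ (A t) := hancN t hAt
    refine ⟨?_, ?_, ?_⟩
    · rw [hanct]; exact mem_mapAtom_args.mpr ⟨A t, hGt.1, rfl⟩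
    · intro c hc hcnf
      rcases mem_mapAtom_args.mp hc with ⟨x, hx, hxc⟩
      rcases hcases t hGt x hx with hxA | hxM
      · rw [hanct, ← hxc, hxA]
      · exfalso
        by_cases hxα : x = αs
        · by_cases hxu : μ x = x
          · exact nf_not_fresh (by rw [← hxc, hxu] at hcnf; exact hcnf) hxM.2.1
          · have : μ x = αs := hNF1 (μ x) (htarg x hxu) (hxc ▸ hcnf)
            exact hxu (this.trans hxα.symm)
        · have : μ x = x := hmm t hAt x hxM hxα
          exact nf_not_fresh (by rw [← hxc, this] at hcnf; exact hcnf) hxM.2.1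
    · intro s hs c hc1 hc2
      obtain ⟨y, hy, hyc⟩ := hMBC t hGt hAt c hc1
      by_cases hnfs : NFat s
      · exact absurd (NFat_map_of_NFat hfix hnfs c hc2.1) (nf_not_fresh · hc1.2.1)
      have hGs : GoodAt S A s := (hA s hs).resolve_left hnfs
      by_cases hAs : Acl s
      · -- s in A-class, t not: impossible
        exfalso
        have hUs := hUset s hs hGs hAs
        have hcA : c ∈ (mapAtom μ a).args := (hUs c).mp hc2.1
        have hcμ : c ≠ μ αs := by rw [← hancP s hAs]; exact hc2.2.2
        exact hNOX t ht hGt hAt c hc1.1 hc1.2.1 hc1.2.2 hcμ hcA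
      · obtain ⟨z, hz, hzc⟩ := hMBC s hGs hAs c hc2
        have hconc : A s = A t → (∀ d, MstP A s d ↔ MstP A t d) →
            anc s = anc t ∧ ∀ d, MMP μ anc s d ↔ MMP μ anc t d := by
          intro h1 h2
          have hia := himargs s t (fun y => by
            rw [hargsIff s hGs y, hargsIff t hGt y, h1]
            exact or_congr Iff.rfl (h2 y))
          refine ⟨by rw [hancN s hAs, hancN t hAt, h1], ?_⟩
          intro d
          show d ∈ (mapAtom μ s).args ∧ isFresh d ∧ d ≠ anc s ↔
               d ∈ (mapAtom μ t).args ∧ isFresh d ∧ d ≠ anc t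
          rw [hancN s hAs, hancN t hAt, h1, hia d]
        by_cases hyα : y = αs <;> by_cases hzα : z = αs
        · -- both anchors: αs is shared member
          have h1 := hGt.2.2 s hs αs (hyα ▸ hy) (hzα ▸ hz)
          exact hconc h1.1 h1.2
        · -- y = αs, z ≠ αs : impossible
          exfalso
          have hzu : μ z = z := hmm s hAs z hz hzα
          have hzeq : z = c := by rw [← hzc, hzu]
          by_cases hyu : μ y = y
          · exact hzα (by rw [hzeq, ← hyc, hyu, hyα])
          · -- c = μ αs with αs changed
            have hcc : μ c = c := by rw [← hyc]; exact hfixt y hyu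
            have hcne : c ≠ αs := by
              intro h
              apply hyu
              rw [hyα, ← h]
              exact hcc
            rcases htargC y hyu with h | h | h | h
            · exact hAs (Or.inr (Or.inr ⟨z, hz, Or.inl (by rwa [hzeq, ← hyc])⟩))
            · exact hAs (Or.inr (Or.inr ⟨z, hz, Or.inr (by rwa [hzeq, ← hyc])⟩))
            · rcases hsplit with ⟨hcab, -⟩ | ⟨-, hsα⟩
              · exact hAs (Or.inr (Or.inr ⟨z, hz, Or.inr (by rw [hzeq, ← hyc, h]; exact hcab)⟩))
              · exact hcne (by rw [← hyc, h, hsα])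
            · rcases hsplit with ⟨-, hsα⟩ | ⟨hcab, hsα⟩
              · exact hcne (by rw [← hyc, h, hsα])
              · by_cases hba : MstP A a (A b)
                · exact hAs (Or.inr (Or.inr ⟨z, hz, Or.inl (by rw [hzeq, ← hyc, h]; exact hba)⟩))
                · exact hcne (by rw [← hyc, h, hL1 hcab hba, hsα])
        · -- z = αs, y ≠ αs : impossible (mirror)
          exfalso
          have hyu : μ y = y := hmm t hAt y hy hyα
          have hyeq : y = c := by rw [← hyc, hyu]
          by_cases hzu : μ z = z
          · exact hyα (by rw [hyeq, ← hzc, hzu, hzα])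
          · have hcc : μ c = c := by rw [← hzc]; exact hfixt z hzu
            have hcne : c ≠ αs := by
              intro h
              apply hzu
              rw [hzα, ← h]
              exact hcc
            rcases htargC z hzu with h | h | h | h
            · exact hAt (Or.inr (Or.inr ⟨y, hy, Or.inl (by rwa [hyeq, ← hzc])⟩))
            · exact hAt (Or.inr (Or.inr ⟨y, hy, Or.inr (by rwa [hyeq, ← hzc])⟩))
            · rcases hsplit with ⟨hcab, -⟩ | ⟨-, hsα⟩
              · exact hAt (Or.inr (Or.inr ⟨y, hy, Or.inr (by rw [hyeq, ← hzc, h]; exact hcab)⟩))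
              · exact hcne (by rw [← hzc, h, hsα])
            · rcases hsplit with ⟨-, hsα⟩ | ⟨hcab, hsα⟩
              · exact hcne (by rw [← hzc, h, hsα])
              · by_cases hba : MstP A a (A b)
                · exact hAt (Or.inr (Or.inr ⟨y, hy, Or.inl (by rw [hyeq, ← hzc, h]; exact hba)⟩))
                · exact hcne (by rw [← hzc, h, hL1 hcab hba, hsα])
        · -- neither is the anchor: both untouched, genuinely shared member
          have hyu : μ y = y := hmm t hAt y hy hyα
          have hzu : μ z = z := hmm s hAs z hz hzα
          have hyeq : y = c := by rw [← hyc, hyu]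
          have hzeq : z = c := by rw [← hzc, hzu]
          have h1 := hGt.2.2 s hs c (hyeq ▸ hy) (hzeq ▸ hz)
          exact hconc h1.1 h1.2


lemma KD_pres (G : EERSig) (Sg : Deps) (S S' : DB)
    (hCD : CDshaped G Sg) (hFI : FI G.ar S) (hstep : KDStep Sg S S') : FI G.ar S' := by
  classical
  obtain ⟨κ, hκ, a, ha, b, hb, hab, harel, hbrel, hkey, μ, hfix, hmapeq, halign, hS'⟩ := hstep
  obtain ⟨hlen, A, hA⟩ := hFI
  subst hS'
  constructor
  · intro t ht
    rcases ht with ⟨u, hu, rfl⟩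
    show (u.args.map μ).length = G.ar (mapAtom μ u).rel
    rw [List.length_map]
    exact hlen u hu
  · have hmlists : a.args.map μ = b.args.map μ := congrArg GAtom.args hmapeq
    obtain ⟨-, i0, hi0, hK⟩ := hCD.2.2.2.2 κ hκ
    have halen : a.args.length = G.ar κ.r := by rw [← harel]; exact hlen a ha
    have hblen : b.args.length = G.ar κ.r := by rw [← hbrel]; exact hlen b hb
    rw [hK] at hkey
    simp only [projT, List.map_cons, List.map_nil, List.cons.injEq, and_true] at hkey
    obtain ⟨k, hk⟩ := get?_eq_some_of_lt (l := a.args) (i := i0) (by omega)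
    have hka : k ∈ a.args := List.mem_of_getElem? hk
    have hkb : k ∈ b.args := List.mem_of_getElem? (by rw [← hkey]; exact hk)
    have hptw : ∀ (i : ℕ) x y, a.args[i]? = some x → b.args[i]? = some y → μ x = μ y := by
      intro i x y hx hy
      have h1 : (a.args.map μ)[i]? = some (μ x) := by rw [List.getElem?_map, hx]; rfl
      have h2 : (b.args.map μ)[i]? = some (μ y) := by rw [List.getElem?_map, hy]; rfl
      rw [hmlists, h2] at h1
      exact (Option.some.inj h1).symm
    have hch : ∀ c, μ c ≠ c →
        isFresh c ∧ ((c ∈ a.args ∧ μ c ∈ b.args) ∨ (c ∈ b.args ∧ μ c ∈ a.args)) := by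
      intro c hc
      refine ⟨by by_contra h; exact hc (hfix c h), ?_⟩
      rcases halign c hc with ⟨i, ⟨h1, h2⟩ | ⟨h1, h2⟩⟩
      · exact Or.inl ⟨List.mem_of_getElem? h1, List.mem_of_getElem? h2⟩
      · exact Or.inr ⟨List.mem_of_getElem? h1, List.mem_of_getElem? h2⟩
    have hfixt : ∀ c, μ c ≠ c → μ (μ c) = μ c := by
      intro c hc
      rcases halign c hc with ⟨i, ⟨h1, h2⟩ | ⟨h1, h2⟩⟩
      · exact (hptw i c (μ c) h1 h2).symm
      · exact hptw i (μ c) c h2 h1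
    -- helper for arity of b-side values
    by_cases hNa : NFat a <;> by_cases hNb : NFat b
    · exfalso
      apply hab
      have h1 : mapAtom μ a = a := mapAtom_eq_self hfix hNa
      have h2 : mapAtom μ b = b := mapAtom_eq_self hfix hNb
      rw [← h1, ← h2, hmapeq]
    · -- a all non-fresh, b anchored: Case I with roles (NF side = a)
      have hGb : GoodAt S A b := (hA b hb).resolve_left hNb
      have hchb : ∀ c, μ c ≠ c → isFresh c ∧ c ∈ b.args := by
        intro c hc
        obtain ⟨hcf, hloc⟩ := hch c hc
        rcases hloc with ⟨h1, -⟩ | ⟨h1, -⟩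
        · exact absurd (hNa c h1) (fun h => nf_not_fresh h hcf)
        · exact ⟨hcf, h1⟩
      have hAbnf : nonFresh (A b) := by
        have := hGb.2.1 k hkb (hNa k hka)
        rw [← this]; exact hNa k hka
      have hI1 : ∀ x ∈ b.args, nonFresh (μ x) := by
        intro x hx
        obtain ⟨j, hj⟩ := List.mem_iff_getElem?.mp hx
        have hjlt : j < a.args.length := by
          have : j < b.args.length := by
            by_contra hcon
            rw [List.getElem?_eq_none_iff.mpr (by omega)] at hj
            exact nomatch hj
          omega
        obtain ⟨w, hw⟩ := get?_eq_some_of_lt hjlt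
        have hwnf : nonFresh w := hNa w (List.mem_of_getElem? hw)
        have : μ x = w := by rw [← (hptw j w x hw hj), hfix w (nf_not_fresh hwnf)]
        rw [this]; exact hwnf
      have hper := caseI_per S A μ b hA hfix hchb hAbnf hGb hb hI1
      refine assembleINV S μ (fun t => μ (A t)) hfix ?_
      intro t ht hnf
      obtain ⟨o1, o2, oM, hGt⟩ := hper t ht hnf
      refine ⟨o1, o2, ?_⟩
      intro s hs c hc1 hc2
      have hcM : MstP A t c := (oM c).mp hc1
      by_cases hnfs : NFat (mapAtom μ s)
      · exact absurd (hnfs c hc2.1) (fun h => nf_not_fresh h hc1.2.1)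
      obtain ⟨-, -, oMs, hGs⟩ := hper s hs hnfs
      have hcMs : MstP A s c := (oMs c).mp hc2
      obtain ⟨hAeq, hMeq⟩ := hGt.2.2 s hs c hcM hcMs
      refine ⟨by show μ (A s) = μ (A t); rw [hAeq], ?_⟩
      intro d
      exact (oMs d).trans ((hMeq d).trans (oM d).symm)
    · -- b all non-fresh, a anchored: symmetric Case I
      have hGa : GoodAt S A a := (hA a ha).resolve_left hNa
      have hcha : ∀ c, μ c ≠ c → isFresh c ∧ c ∈ a.args := by
        intro c hc
        obtain ⟨hcf, hloc⟩ := hch c hc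
        rcases hloc with ⟨h1, -⟩ | ⟨h1, -⟩
        · exact ⟨hcf, h1⟩
        · exact absurd (hNb c h1) (fun h => nf_not_fresh h hcf)
      have hAanf : nonFresh (A a) := by
        have := hGa.2.1 k hka (hNb k hkb)
        rw [← this]; exact hNb k hkb
      have hI1 : ∀ x ∈ a.args, nonFresh (μ x) := by
        intro x hx
        obtain ⟨j, hj⟩ := List.mem_iff_getElem?.mp hx
        have hjlt : j < b.args.length := by
          have : j < a.args.length := by
            by_contra hcon
            rw [List.getElem?_eq_none_iff.mpr (by omega)] at hj
            exact nomatch hj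
          omega
        obtain ⟨w, hw⟩ := get?_eq_some_of_lt hjlt
        have hwnf : nonFresh w := hNb w (List.mem_of_getElem? hw)
        have : μ x = w := by rw [hptw j x w hj hw, hfix w (nf_not_fresh hwnf)]
        rw [this]; exact hwnf
      have hper := caseI_per S A μ a hA hfix hcha hAanf hGa ha hI1
      refine assembleINV S μ (fun t => μ (A t)) hfix ?_
      intro t ht hnf
      obtain ⟨o1, o2, oM, hGt⟩ := hper t ht hnf
      refine ⟨o1, o2, ?_⟩
      intro s hs c hc1 hc2
      have hcM : MstP A t c := (oM c).mp hc1
      by_cases hnfs : NFat (mapAtom μ s)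
      · exact absurd (hnfs c hc2.1) (fun h => nf_not_fresh h hc1.2.1)
      obtain ⟨-, -, oMs, hGs⟩ := hper s hs hnfs
      have hcMs : MstP A s c := (oMs c).mp hc2
      obtain ⟨hAeq, hMeq⟩ := hGt.2.2 s hs c hcM hcMs
      refine ⟨by show μ (A s) = μ (A t); rw [hAeq], ?_⟩
      intro d
      exact (oMs d).trans ((hMeq d).trans (oM d).symm)
    · exact caseII S A μ a b hA ha hb ((hA a ha).resolve_left hNa)
        ((hA b hb).resolve_left hNb) hfix hmlists hch hfixt k hka hkb

end CDP

/-- in the chase of a database `D` (with only non-fresh constants)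
under conceptual dependencies, every fact over a relationship predicate
`r ∈ R_R` contains either only non-fresh constants, or only fresh constants, or
exactly one distinct non-fresh constant (possibly occurring in several
positions); no other combination occurs. -/
theorem relationship_facts_trichotomy_in_chase
    (G : EERSig) (Sg : Deps) (D Ch : DB)
    (hCD : CDshaped G Sg)
    (hDfin : D.Finite)
    (hDnf : ∀ a ∈ D, ∀ c ∈ a.args, nonFresh c)
    (hDar : ∀ a ∈ D, a.args.length = G.ar a.rel)
    (hchase : IsChase G.ar Sg D Ch) :
    ∀ a ∈ Ch, a.rel ∈ G.RR →
      (∀ c ∈ a.args, nonFresh c) ∨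
      (∀ c ∈ a.args, isFresh c) ∨
      (∃ c : Const, nonFresh c ∧ c ∈ a.args ∧ ∀ x ∈ a.args, isFresh x ∨ x = c) := by
  obtain ⟨seq, h0, hsteps, hlim, -⟩ := hchase
  have hFI : ∀ n, CDP.FI G.ar (seq n) := by
    intro n
    induction n with
    | zero =>
      rw [h0]
      exact ⟨hDar, fun _ => Sum.inl 0, fun t ht => Or.inl (fun c hc => hDnf t ht c hc)⟩
    | succ n ih =>
      rcases hsteps n with hst | heq
      · rcases hst with hid | hkd
        · exact CDP.ID_pres G Sg (seq n) (seq (n+1)) hCD ih hid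
        · exact CDP.KD_pres G Sg (seq n) (seq (n+1)) hCD ih hkd
      · rw [heq]; exact ih
  intro a haCh hRR
  rw [hlim] at haCh
  obtain ⟨N, hN⟩ := haCh
  exact CDP.tri_of_INV (hFI N).2 a (hN N le_rfl)
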